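/- Let M be a tractable metric space and C ≥ 0. Then the magnitude map on nonempty compact subsets of M (with the Hausdorff metric) is C-Lipschitz if and only if the magnitude map on nonempty finite subsets of M (with the Hausdorff metric) is C-Lipschitz. -/
import Mathlib


open Metric TopologicalSpace Filter Topology Bornology
open scoped ENNReal NNReal

/-- The similarity matrix of a finite subset of a metric space. -/
noncomputable def simMatrix {X : Type*} [MetricSpace X] (s : Finset X) : Matrix s s ℝ :=
  fun i j => Real.exp (-dist (i : X) (j : X))

/-- A metric space is positive definite when every finite subspace has a positive
definite similarity matrix. -/
def IsPosDefSpace (X : Type*) [MetricSpace X] : Prop :=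
  ∀ s : Finset X, (simMatrix s).PosDef

/-- The magnitude of a finite subset of a metric space: the sum of the entries of the
inverse of its similarity matrix. -/
noncomputable def finMag {X : Type*} [MetricSpace X] (s : Finset X) : ℝ :=
  letI : DecidableEq X := Classical.decEq X
  ∑ i, ∑ j, (simMatrix s)⁻¹ i j

/-- The magnitude of a (compact) subset of a metric space, valued in `[0, ∞]`:
the supremum of the magnitudes of its finite subsets. -/
noncomputable def cMagE {X : Type*} [MetricSpace X] (K : Set X) : ℝ≥0∞ :=
  ⨆ (s : Finset X) (_ : (s : Set X) ⊆ K), ENNReal.ofReal (finMag s)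

/-- The real-valued magnitude of a (compact) subset of a metric space. -/
noncomputable def cMag {X : Type*} [MetricSpace X] (K : Set X) : ℝ :=
  (cMagE K).toReal

/-- A metric space is tractable when it is positive definite and all of its closed balls
are compact and of finite magnitude. -/
def Tractable (X : Type*) [MetricSpace X] : Prop :=
  IsPosDefSpace X ∧ (∀ (x : X) (r : ℝ), IsCompact (closedBall x r)) ∧
    ∀ (x : X) (r : ℝ), cMagE (closedBall x r) < ⊤

lemma cMagE_mono {X : Type*} [MetricSpace X] {K L : Set X} (h : K ⊆ L) :
    cMagE K ≤ cMagE L := by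
  refine iSup_le fun s => iSup_le fun hs => ?_
  exact le_iSup_of_le s (le_iSup_of_le (hs.trans h) le_rfl)

lemma cMagE_ne_top {X : Type*} [MetricSpace X] (hX : Tractable X) {K : Set X}
    (hK : IsCompact K) (hne : K.Nonempty) : cMagE K ≠ ⊤ := by
  obtain ⟨x, hx⟩ := hne
  obtain ⟨r, hr⟩ := hK.isBounded.subset_closedBall x
  exact ((cMagE_mono hr).trans_lt (hX.2.2 x r)).ne

lemma cMag_nonneg {X : Type*} [MetricSpace X] (K : Set X) : 0 ≤ cMag K :=
  ENNReal.toReal_nonneg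

lemma finMag_empty {X : Type*} [MetricSpace X] : finMag (∅ : Finset X) = 0 := by
  simp [finMag]

/-- Key inequality for the reverse direction. -/
lemma key_ineq {M : Type*} [MetricSpace M] (hM : Tractable M) (C : ℝ≥0)
    (h : LipschitzWith C (fun F : {K : NonemptyCompacts M // (K : Set M).Finite} =>
        cMag ((F : NonemptyCompacts M) : Set M)))
    (K L : NonemptyCompacts M) {ε : ℝ} (hε : 0 < ε) :
    cMag (K : Set M) ≤ cMag (L : Set M) + C * (dist K L + ε) := by
  set d : ℝ := dist K L with hd
  have hd0 : 0 ≤ d := dist_nonneg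
  have hRHS0 : 0 ≤ cMag (L : Set M) + C * (d + ε) := add_nonneg (cMag_nonneg _) (by positivity)
  have hmain : cMagE (K : Set M) ≤ ENNReal.ofReal (cMag (L : Set M) + C * (d + ε)) := by
    refine iSup_le fun s => iSup_le fun hs => ?_
    rcases s.eq_empty_or_nonempty with rfl | hsne
    · simp [finMag_empty, hRHS0]
    -- build a nearby finite subset of L
    have hfin : EMetric.hausdorffEdist (K : Set M) (L : Set M) ≠ ⊤ :=
      hausdorffEdist_ne_top_of_nonempty_of_bounded K.nonempty L.nonempty
        K.isCompact.isBounded L.isCompact.isBounded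
    have hdlt : hausdorffDist (K : Set M) (L : Set M) < d + ε := by
      rw [← NonemptyCompacts.dist_eq, ← hd]; linarith
    have hch : ∀ x ∈ s, ∃ y ∈ (L : Set M), dist x y < d + ε := fun x hx =>
      exists_dist_lt_of_hausdorffDist_lt (hs hx) hdlt hfin
    classical
    set t : Finset M := s.attach.image (fun x => (hch x.1 x.2).choose) with ht
    have htL : (t : Set M) ⊆ (L : Set M) := by
      intro y hy
      simp only [ht, Finset.coe_image, Set.mem_image, Finset.mem_coe,
        Finset.mem_attach] at hy
      obtain ⟨x, -, rfl⟩ := hy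
      exact (hch x.1 x.2).choose_spec.1
    have htne : t.Nonempty := (hsne.attach).image _
    have hHdist : hausdorffDist (s : Set M) (t : Set M) ≤ d + ε := by
      refine hausdorffDist_le_of_mem_dist (by positivity) ?_ ?_
      · intro x hx
        have hx' : x ∈ s := hx
        refine ⟨(hch x hx').choose, ?_, (hch x hx').choose_spec.2.le⟩
        simp only [ht, Finset.coe_image, Set.mem_image]
        exact ⟨⟨x, hx'⟩, by simp, rfl⟩
      · intro y hy
        simp only [ht, Finset.coe_image, Set.mem_image, Finset.mem_coe,
          Finset.mem_attach] at hy
        obtain ⟨x, -, rfl⟩ := hy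
        exact ⟨x.1, x.2, by rw [dist_comm]; exact (hch x.1 x.2).choose_spec.2.le⟩
    -- the two nonempty compacts
    set A : {K : NonemptyCompacts M // (K : Set M).Finite} :=
      ⟨⟨⟨(s : Set M), s.finite_toSet.isCompact⟩, Finset.coe_nonempty.mpr hsne⟩,
        s.finite_toSet⟩ with hA
    set B : {K : NonemptyCompacts M // (K : Set M).Finite} :=
      ⟨⟨⟨(t : Set M), t.finite_toSet.isCompact⟩, Finset.coe_nonempty.mpr htne⟩,
        t.finite_toSet⟩ with hB
    have hdistAB : dist A B ≤ d + ε := by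
      rw [Subtype.dist_eq, NonemptyCompacts.dist_eq]
      exact hHdist
    have hlip := h.dist_le_mul A B
    have habs : |cMag (s : Set M) - cMag (t : Set M)| ≤ C * (d + ε) := by
      have : dist (cMag (s : Set M)) (cMag (t : Set M)) ≤ C * (d + ε) :=
        hlip.trans (by
          have : (C : ℝ) * dist A B ≤ C * (d + ε) :=
            mul_le_mul_of_nonneg_left hdistAB C.coe_nonneg
          exact this)
      rwa [Real.dist_eq] at this
    have htle : cMag (t : Set M) ≤ cMag (L : Set M) :=
      ENNReal.toReal_mono (cMagE_ne_top hM L.isCompact L.nonempty) (cMagE_mono htL)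
    have hsle : cMag (s : Set M) ≤ cMag (L : Set M) + C * (d + ε) := by
      have := abs_sub_le_iff.mp habs
      linarith [this.1]
    have hsne_top : cMagE (s : Set M) ≠ ⊤ :=
      cMagE_ne_top hM s.finite_toSet.isCompact (Finset.coe_nonempty.mpr hsne)
    calc ENNReal.ofReal (finMag s) ≤ cMagE (s : Set M) :=
          le_iSup_of_le s (le_iSup_of_le subset_rfl le_rfl)
      _ = ENNReal.ofReal (cMag (s : Set M)) := (ENNReal.ofReal_toReal hsne_top).symm
      _ ≤ ENNReal.ofReal (cMag (L : Set M) + C * (d + ε)) := ENNReal.ofReal_le_ofReal hsle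
  calc cMag (K : Set M) ≤ (ENNReal.ofReal (cMag (L : Set M) + C * (d + ε))).toReal :=
        ENNReal.toReal_mono ENNReal.ofReal_ne_top hmain
    _ = cMag (L : Set M) + C * (d + ε) := ENNReal.toReal_ofReal hRHS0


/-- For a tractable metric space `M` and `C ≥ 0`, the magnitude map on
nonempty compact subsets is `C`-Lipschitz iff the magnitude map on nonempty finite
subsets is `C`-Lipschitz. -/
theorem stmt_12 {M : Type*} [MetricSpace M] (hM : Tractable M) (C : ℝ≥0) :
    LipschitzWith C (fun K : NonemptyCompacts M => cMag (K : Set M)) ↔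
      LipschitzWith C (fun F : {K : NonemptyCompacts M // (K : Set M).Finite} =>
        cMag ((F : NonemptyCompacts M) : Set M)) := by
  constructor
  · intro h x y
    have := h x.val y.val
    rwa [Subtype.edist_eq]
  · intro h
    refine LipschitzWith.of_dist_le_mul fun K L => ?_
    have hle : ∀ (A B : NonemptyCompacts M),
        cMag (A : Set M) ≤ cMag (B : Set M) + C * dist A B := by
      intro A B
      refine le_of_forall_pos_le_add fun δ hδ => ?_
      rcases eq_or_lt_of_le C.coe_nonneg with hC | hC
      · have := key_ineq hM C h A B one_pos
        rw [← hC] at this ⊢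
        simpa using this.trans (by linarith [cMag_nonneg (B : Set M)])
      · have := key_ineq hM C h A B (div_pos hδ hC)
        rw [mul_add, mul_div_cancel₀ _ hC.ne'] at this
        linarith
    rw [Real.dist_eq, abs_sub_le_iff]
    have h1 := hle K L
    have h2 := hle L K
    rw [dist_comm] at h2
    constructor <;> linarith
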